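/- Let q ∈ ℂ satisfy q ≠ 0 and q^{2k} ≠ 1 for all 1 ≤ k ≤ N. Then for every integer n with 0 ≤ n ≤ N: Σ_{s=1}^{N} (−1)^{s−1} · [N choose N−s]_q · q^{s(N−n)} · [s·n]_q/[s]_q = n (as a complex number). (This expresses that the N-th spin-chain eigenvalue ε_N(n) vanishes identically.) -/

import Mathlib

open scoped BigOperators

noncomputable section

namespace Stmt14

/-- The symmetric q-integer `[n]_q = (qⁿ − q⁻ⁿ)/(q − q⁻¹)`. -/
def qint (q : ℂ) (n : ℕ) : ℂ := (q ^ n - q⁻¹ ^ n) / (q - q⁻¹)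

/-- The q-factorial `[n]_q! = [n]_q · [n−1]_q ⋯ [1]_q` (with `[0]_q! = 1`). -/
def qfact (q : ℂ) : ℕ → ℂ
  | 0 => 1
  | n + 1 => qint q (n + 1) * qfact q n

/-- The q-binomial coefficient `[n choose r]_q = [n]_q!/([r]_q!·[n−r]_q!)`. -/
def qbinom (q : ℂ) (n r : ℕ) : ℂ := qfact q n / (qfact q r * qfact q (n - r))

variable {q : ℂ}

lemma qsub_ne (hq0 : q ≠ 0) (h2 : q ^ 2 ≠ 1) : q - q⁻¹ ≠ 0 := by
  intro h
  apply h2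
  have h' := sub_eq_zero.mp h
  rw [sq]
  nth_rewrite 2 [h']
  rw [mul_inv_cancel₀ hq0]

lemma qint_ne (hq0 : q ≠ 0) (h2 : q ^ 2 ≠ 1) {k : ℕ} (hk : q ^ (2 * k) ≠ 1) :
    qint q k ≠ 0 := by
  apply div_ne_zero _ (qsub_ne hq0 h2)
  intro h
  apply hk
  have h' := sub_eq_zero.mp h
  have : q ^ (2 * k) = q ^ k * q ^ k := by ring
  rw [this]
  nth_rewrite 2 [h']
  rw [inv_pow, mul_inv_cancel₀ (pow_ne_zero k hq0)]

lemma qfact_ne {N : ℕ} (hq0 : q ≠ 0) (h2 : q ^ 2 ≠ 1)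
    (hq : ∀ k, 1 ≤ k → k ≤ N → q ^ (2 * k) ≠ 1) :
    ∀ k ≤ N, qfact q k ≠ 0 := by
  intro k
  induction k with
  | zero => intro _; simp [qfact]
  | succ m ih =>
    intro hm
    have h1 : qfact q m ≠ 0 := ih (le_trans (Nat.le_succ m) hm)
    have h2' : qint q (m + 1) ≠ 0 :=
      qint_ne hq0 h2 (hq (m + 1) (Nat.succ_le_succ (Nat.zero_le m)) hm)
    exact mul_ne_zero h2' h1

lemma qbinom_symm {N s : ℕ} (h : s ≤ N) : qbinom q N (N - s) = qbinom q N s := by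
  unfold qbinom
  rw [Nat.sub_sub_self h, mul_comm]

lemma qbinom_zero {N : ℕ} (h : qfact q N ≠ 0) : qbinom q N 0 = 1 := by
  unfold qbinom
  simp [qfact, div_self h]

lemma qbinom_self {N : ℕ} (h : qfact q N ≠ 0) : qbinom q N N = 1 := by
  unfold qbinom
  simp [qfact, div_self h]

lemma qint_add (a b : ℕ) :
    qint q (a + b) = q ^ a * qint q b + q⁻¹ ^ b * qint q a := by
  unfold qint
  rw [← mul_div_assoc, ← mul_div_assoc, ← add_div]
  congr 1
  rw [pow_add, pow_add]
  ring

lemma pascal (a b : ℕ) (hfa : qfact q a ≠ 0) (hfb : qfact q b ≠ 0)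
    (hia : qint q (a + 1) ≠ 0) (hib : qint q (b + 1) ≠ 0)
    (hF : qfact q (a + b + 1) ≠ 0) :
    qbinom q (a + b + 2) (a + 1) =
      q ^ (a + 1) * qbinom q (a + b + 1) (a + 1) + q⁻¹ ^ (b + 1) * qbinom q (a + b + 1) a := by
  have e1 : a + b + 2 - (a + 1) = b + 1 := by omega
  have e2 : a + b + 1 - (a + 1) = b := by omega
  have e3 : a + b + 1 - a = b + 1 := by omega
  unfold qbinom
  rw [e1, e2, e3]
  have key : qfact q (a + b + 2) = qint q (a + b + 2) * qfact q (a + b + 1) := rfl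
  have ka : qfact q (a + 1) = qint q (a + 1) * qfact q a := rfl
  have kb : qfact q (b + 1) = qint q (b + 1) * qfact q b := rfl
  have hadd : qint q (a + b + 2) = q ^ (a + 1) * qint q (b + 1) + q⁻¹ ^ (b + 1) * qint q (a + 1) := by
    have h := qint_add (q := q) (a + 1) (b + 1)
    have e : a + 1 + (b + 1) = a + b + 2 := by omega
    rwa [e] at h
  rw [key, ka, kb, hadd]
  rw [← mul_div_assoc, ← mul_div_assoc,
    div_add_div _ _ (mul_ne_zero (mul_ne_zero hia hfa) hfb) (mul_ne_zero hfa (mul_ne_zero hib hfb)),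
    div_eq_div_iff (mul_ne_zero (mul_ne_zero hia hfa) (mul_ne_zero hib hfb))
      (mul_ne_zero (mul_ne_zero (mul_ne_zero hia hfa) hfb) (mul_ne_zero hfa (mul_ne_zero hib hfb)))]
  ring

lemma geo (x : ℂ) (hx : x ≠ 0) (n : ℕ) :
    (x - x⁻¹) * ∑ j ∈ Finset.range n, x ^ ((n : ℤ) - 1 - 2 * (j : ℤ)) =
      x ^ (n : ℤ) - x ^ (-(n : ℤ)) := by
  induction n with
  | zero => simp
  | succ m ih =>
    rw [Finset.sum_range_succ']
    have step : ∀ j ∈ Finset.range m,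
        x ^ (((m + 1 : ℕ) : ℤ) - 1 - 2 * ((j + 1 : ℕ) : ℤ)) = x⁻¹ * x ^ ((m : ℤ) - 1 - 2 * (j : ℤ)) := by
      intro j _
      rw [← zpow_neg_one, ← zpow_add₀ hx]
      congr 1
      push_cast
      ring
    rw [Finset.sum_congr rfl step, ← Finset.mul_sum]
    have e0 : ((m + 1 : ℕ) : ℤ) - 1 - 2 * ((0 : ℕ) : ℤ) = (m : ℤ) := by push_cast; ring
    rw [e0]
    have eA : x ^ (((m + 1 : ℕ) : ℤ)) = x ^ (m : ℤ) * x := by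
      rw [← zpow_add_one₀ hx]; norm_cast
    have eB : x ^ (-((m + 1 : ℕ) : ℤ)) = x ^ (-(m : ℤ)) * x⁻¹ := by
      rw [← zpow_neg_one, ← zpow_add₀ hx]; congr 1; push_cast; ring
    rw [eA, eB]
    linear_combination x⁻¹ * ih

lemma qint_ratio (s n : ℕ) (hq0 : q ≠ 0) :
    qint q (s * n) = qint q s * ∑ j ∈ Finset.range n, q ^ ((s : ℤ) * ((n : ℤ) - 1 - 2 * (j : ℤ))) := by
  have hx : q ^ s ≠ 0 := pow_ne_zero _ hq0
  have g := geo (q ^ s) hx n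
  unfold qint
  rw [div_mul_eq_mul_div]
  congr 1
  have esum : ∀ j ∈ Finset.range n,
      q ^ ((s : ℤ) * ((n : ℤ) - 1 - 2 * (j : ℤ))) = (q ^ s) ^ ((n : ℤ) - 1 - 2 * (j : ℤ)) := by
    intro j _
    rw [← zpow_natCast q s, ← zpow_mul]
  rw [Finset.sum_congr rfl esum]
  have h1 : (q ^ s)⁻¹ = q⁻¹ ^ s := by rw [inv_pow]
  have h2 : (q ^ s) ^ (n : ℤ) = q ^ (s * n) := by
    rw [zpow_natCast, ← pow_mul]
  have h3 : (q ^ s) ^ (-(n : ℤ)) = q⁻¹ ^ (s * n) := by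
    rw [zpow_neg, zpow_natCast, ← pow_mul, ← inv_pow]
  rw [← h1, ← h2, ← h3]
  exact g.symm

lemma gen (hq0 : q ≠ 0) :
    ∀ M : ℕ, (∀ k ≤ M, qfact q k ≠ 0) → (∀ k, 1 ≤ k → k ≤ M → qint q k ≠ 0) → ∀ t : ℂ,
    ∑ s ∈ Finset.range (M + 1), (-1 : ℂ) ^ s * qbinom q M s * t ^ s =
      ∏ k ∈ Finset.range M, (1 - q ^ (2 * (k : ℤ) - (M : ℤ) + 1) * t) := by
  intro M
  induction M with
  | zero =>
    intro hF hI t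
    simp [qbinom, qfact]
  | succ m ih =>
    intro hF hI t
    have hFm : ∀ k ≤ m, qfact q k ≠ 0 := fun k hk => hF k (by omega)
    have hIm : ∀ k, 1 ≤ k → k ≤ m → qint q k ≠ 0 := fun k h1 h2 => hI k h1 (by omega)
    have P := ih hFm hIm (q * t)
    have hqe : ∀ s, s ≤ m → q⁻¹ ^ (m - s) = q⁻¹ ^ m * q ^ s := by
      intro s hs
      have h1 : q⁻¹ ^ (m - s) * q⁻¹ ^ s = q⁻¹ ^ m := by
        rw [← pow_add]; congr 1; omega
      have h2 : q⁻¹ ^ s * q ^ s = 1 := by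
        rw [← mul_pow, inv_mul_cancel₀ hq0, one_pow]
      calc q⁻¹ ^ (m - s) = q⁻¹ ^ (m - s) * (q⁻¹ ^ s * q ^ s) := by rw [h2, mul_one]
        _ = (q⁻¹ ^ (m - s) * q⁻¹ ^ s) * q ^ s := by ring
        _ = q⁻¹ ^ m * q ^ s := by rw [h1]
    rw [Finset.sum_range_succ, Finset.sum_range_succ']
    have hps : ∀ s ∈ Finset.range m,
        (-1 : ℂ) ^ (s + 1) * qbinom q (m + 1) (s + 1) * t ^ (s + 1) =
          (-1 : ℂ) ^ (s + 1) * (q ^ (s + 1) * qbinom q m (s + 1)) * t ^ (s + 1)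
          + (-1 : ℂ) ^ (s + 1) * (q⁻¹ ^ (m - s) * qbinom q m s) * t ^ (s + 1) := by
      intro s hs
      have hsm := Finset.mem_range.mp hs
      have hp := pascal (q := q) s (m - 1 - s) (hFm s (by omega)) (hFm (m - 1 - s) (by omega))
        (hIm (s + 1) (by omega) (by omega)) (hIm (m - 1 - s + 1) (by omega) (by omega))
        (hFm (s + (m - 1 - s) + 1) (by omega))
      have e1 : s + (m - 1 - s) + 2 = m + 1 := by omega
      have e2 : s + (m - 1 - s) + 1 = m := by omega
      have e3 : m - 1 - s + 1 = m - s := by omega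
      rw [e1, e2, e3] at hp
      rw [hp]
      ring
    rw [Finset.sum_congr rfl hps, Finset.sum_add_distrib]
    have SA : ∑ s ∈ Finset.range m, (-1 : ℂ) ^ (s + 1) * (q ^ (s + 1) * qbinom q m (s + 1)) * t ^ (s + 1)
        = (∑ s ∈ Finset.range (m + 1), (-1 : ℂ) ^ s * qbinom q m s * (q * t) ^ s) - 1 := by
      rw [Finset.sum_range_succ' (fun s => (-1 : ℂ) ^ s * qbinom q m s * (q * t) ^ s) m]
      rw [qbinom_zero (hFm m le_rfl)]
      have : ∀ s ∈ Finset.range m,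
          (-1 : ℂ) ^ (s + 1) * qbinom q m (s + 1) * (q * t) ^ (s + 1) =
            (-1 : ℂ) ^ (s + 1) * (q ^ (s + 1) * qbinom q m (s + 1)) * t ^ (s + 1) := by
        intro s _
        rw [mul_pow]
        ring
      rw [Finset.sum_congr rfl this]
      simp
    have SB : (∑ s ∈ Finset.range m, (-1 : ℂ) ^ (s + 1) * (q⁻¹ ^ (m - s) * qbinom q m s) * t ^ (s + 1))
          + (-1 : ℂ) ^ (m + 1) * qbinom q (m + 1) (m + 1) * t ^ (m + 1)
        = -(q⁻¹ ^ m * t) * ∑ s ∈ Finset.range (m + 1), (-1 : ℂ) ^ s * qbinom q m s * (q * t) ^ s := by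
      have hlast : (-1 : ℂ) ^ (m + 1) * qbinom q (m + 1) (m + 1) * t ^ (m + 1)
          = (-1 : ℂ) ^ (m + 1) * (q⁻¹ ^ (m - m) * qbinom q m m) * t ^ (m + 1) := by
        rw [qbinom_self (hF (m + 1) le_rfl), qbinom_self (hFm m le_rfl), Nat.sub_self]
        ring
      rw [hlast, ← Finset.sum_range_succ
        (fun s => (-1 : ℂ) ^ (s + 1) * (q⁻¹ ^ (m - s) * qbinom q m s) * t ^ (s + 1)) m]
      rw [Finset.mul_sum]
      apply Finset.sum_congr rfl
      intro s hs
      have hsm : s ≤ m := by have := Finset.mem_range.mp hs; omega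
      rw [hqe s hsm, mul_pow]
      ring
    have RH : ∏ k ∈ Finset.range (m + 1), (1 - q ^ (2 * (k : ℤ) - ((m + 1 : ℕ) : ℤ) + 1) * t)
        = (∏ k ∈ Finset.range m, (1 - q ^ (2 * (k : ℤ) - (m : ℤ) + 1) * (q * t))) * (1 - q⁻¹ ^ m * t) := by
      rw [Finset.prod_range_succ']
      congr 1
      · apply Finset.prod_congr rfl
        intro k _
        congr 1
        rw [show (2 * ((k + 1 : ℕ) : ℤ) - ((m + 1 : ℕ) : ℤ) + 1)
            = (2 * (k : ℤ) - (m : ℤ) + 1) + 1 from by push_cast; ring,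
          zpow_add_one₀ hq0]
        ring
      · congr 1
        rw [show (2 * ((0 : ℕ) : ℤ) - ((m + 1 : ℕ) : ℤ) + 1) = -(m : ℤ) from by push_cast; ring,
          zpow_neg, zpow_natCast, ← inv_pow]
    have h0 : qbinom q (m + 1) 0 = 1 := qbinom_zero (hF (m + 1) le_rfl)
    linear_combination SA + SB + h0 + (1 - q⁻¹ ^ m * t) * P - RH

lemma inner_sum (hq0 : q ≠ 0) {N : ℕ} (hF : ∀ k ≤ N, qfact q k ≠ 0)
    (hI : ∀ k, 1 ≤ k → k ≤ N → qint q k ≠ 0) {j : ℕ} (hj : j < N) :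
    ∑ s ∈ Finset.Icc 1 N,
        (-1 : ℂ) ^ (s - 1) * qbinom q N s * q ^ ((s : ℤ) * ((N : ℤ) - 1 - 2 * (j : ℤ))) = 1 := by
  set m : ℤ := (N : ℤ) - 1 - 2 * (j : ℤ) with hm
  have G := gen hq0 N hF hI (q ^ m)
  have zero : ∏ k ∈ Finset.range N, (1 - q ^ (2 * (k : ℤ) - (N : ℤ) + 1) * q ^ m) = 0 := by
    apply Finset.prod_eq_zero (Finset.mem_range.mpr hj)
    rw [← zpow_add₀ hq0, show 2 * (j : ℤ) - (N : ℤ) + 1 + m = 0 from by rw [hm]; ring]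
    simp
  have S0 := G.trans zero
  rw [Finset.sum_range_succ'] at S0
  rw [← Finset.Ico_add_one_right_eq_Icc, Finset.sum_Ico_eq_sum_range]
  simp only [Nat.add_sub_cancel]
  have step : ∀ i ∈ Finset.range N,
      (-1 : ℂ) ^ (1 + i - 1) * qbinom q N (1 + i) * q ^ (((1 + i : ℕ) : ℤ) * m) =
        -((-1 : ℂ) ^ (i + 1) * qbinom q N (i + 1) * (q ^ m) ^ (i + 1)) := by
    intro i _
    rw [show 1 + i = i + 1 from by omega, Nat.add_sub_cancel]
    rw [← zpow_natCast (q ^ m) (i + 1), ← zpow_mul]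
    rw [show m * ((i + 1 : ℕ) : ℤ) = ((i + 1 : ℕ) : ℤ) * m from by ring]
    ring
  rw [Finset.sum_congr rfl step, Finset.sum_neg_distrib]
  have h0 : qbinom q N 0 = 1 := qbinom_zero (hF N le_rfl)
  rw [h0] at S0
  simp only [pow_zero, one_mul, mul_one] at S0
  linear_combination -S0

/-- The `N`-th spin-chain eigenvalue `ε_N(n)` vanishes identically:
`Σ_{s=1}^{N} (−1)^{s−1}·[N choose N−s]_q·q^{s(N−n)}·[s·n]_q/[s]_q = n` for `0 ≤ n ≤ N`. -/
theorem epsilon_N_vanishes (N : ℕ) (hN : 0 < N) (q : ℂ) (hq0 : q ≠ 0)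
    (hq : ∀ k, 1 ≤ k → k ≤ N → q ^ (2 * k) ≠ 1) (n : ℕ) (hn : n ≤ N) :
    ∑ s ∈ Finset.Icc 1 N,
        (-1 : ℂ) ^ (s - 1) * qbinom q N (N - s) * q ^ (s * (N - n)) *
          (qint q (s * n) / qint q s)
      = (n : ℂ) := by
  have h2 : q ^ 2 ≠ 1 := by
    have := hq 1 le_rfl hN
    simpa using this
  have hI : ∀ k, 1 ≤ k → k ≤ N → qint q k ≠ 0 := fun k h1 h2' =>
    qint_ne hq0 h2 (hq k h1 h2')
  have hF : ∀ k ≤ N, qfact q k ≠ 0 := qfact_ne hq0 h2 hq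
  have step1 : ∀ s ∈ Finset.Icc 1 N,
      (-1 : ℂ) ^ (s - 1) * qbinom q N (N - s) * q ^ (s * (N - n)) *
          (qint q (s * n) / qint q s)
        = ∑ j ∈ Finset.range n,
            (-1 : ℂ) ^ (s - 1) * qbinom q N s * q ^ ((s : ℤ) * ((N : ℤ) - 1 - 2 * (j : ℤ))) := by
    intro s hs
    obtain ⟨hs1, hsN⟩ := Finset.mem_Icc.mp hs
    rw [qbinom_symm hsN, qint_ratio s n hq0, mul_comm (qint q s) _, mul_div_assoc,
      div_self (hI s hs1 hsN), mul_one, Finset.mul_sum]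
    apply Finset.sum_congr rfl
    intro j _
    rw [mul_assoc ((-1 : ℂ) ^ (s - 1) * qbinom q N s)]
    congr 1
    rw [← zpow_natCast q (s * (N - n)), ← zpow_add₀ hq0]
    congr 1
    push_cast [Nat.cast_sub hn]
    ring
  rw [Finset.sum_congr rfl step1, Finset.sum_comm]
  have inner : ∀ j ∈ Finset.range n,
      ∑ s ∈ Finset.Icc 1 N,
          (-1 : ℂ) ^ (s - 1) * qbinom q N s * q ^ ((s : ℤ) * ((N : ℤ) - 1 - 2 * (j : ℤ))) = 1 := by
    intro j hj
    exact inner_sum hq0 hF hI (lt_of_lt_of_le (Finset.mem_range.mp hj) hn)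
  rw [Finset.sum_congr rfl inner, Finset.sum_const, Finset.card_range]
  simp

end Stmt14
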